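/- For every integer n ≥ 4 with n ≡ 0 (mod 4), the boundary of a square of edge length 2 + (n-4)·√2/4 can be covered by n unit squares; i.e., S_bd(n) ≥ 2 + ((n-4)/4)·√2, and in fact S_bd(4) = 2 with S_bd(n+4) = S_bd(n) + √2. -/

import Mathlib

open Set Metric

noncomputable section

abbrev E2 := EuclideanSpace ℝ (Fin 2)

def unitSq : Set E2 := {p | p 0 ∈ Set.Icc (0:ℝ) 1 ∧ p 1 ∈ Set.Icc (0:ℝ) 1}

def IsUnitSquare (S : Set E2) : Prop := ∃ f : E2 ≃ᵢ E2, S = f '' unitSq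

/-- The axis-aligned square of edge length `a` with a corner at the origin. -/
def sqSet (a : ℝ) : Set E2 := {p | p 0 ∈ Set.Icc 0 a ∧ p 1 ∈ Set.Icc 0 a}

/-- `Sbd n`: the largest edge length of a square whose boundary can be covered by `n`
unit squares. -/
def Sbd (n : ℕ) : ℝ :=
  sSup {s | 0 ≤ s ∧ ∃ F : Fin n → Set E2,
    (∀ i, IsUnitSquare (F i)) ∧ frontier (sqSet s) ⊆ ⋃ i, F i}

open MeasureTheory

def pt (a b : ℝ) : E2 := (WithLp.equiv 2 (Fin 2 → ℝ)).symm ![a, b]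
@[simp] lemma pt0 (a b : ℝ) : pt a b 0 = a := rfl
@[simp] lemma pt1 (a b : ℝ) : pt a b 1 = b := rfl

lemma dist_eq2 (x y : E2) : dist x y = Real.sqrt ((x 0 - y 0)^2 + (x 1 - y 1)^2) := by
  rw [EuclideanSpace.dist_eq, Fin.sum_univ_two]
  simp [Real.dist_eq, sq_abs]

lemma abs_coord_le_dist (x y : E2) (i : Fin 2) : |x i - y i| ≤ dist x y := by
  rw [dist_eq2, ← Real.sqrt_sq_eq_abs]
  apply Real.sqrt_le_sqrt
  have : i = 0 ∨ i = 1 := by omega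
  rcases this with rfl | rfl
  · nlinarith [sq_nonneg (x 1 - y 1)]
  · nlinarith [sq_nonneg (x 0 - y 0)]

lemma diam_unitSq {x y : E2} (hx : x ∈ unitSq) (hy : y ∈ unitSq) :
    dist x y ≤ Real.sqrt 2 := by
  rw [dist_eq2]
  apply Real.sqrt_le_sqrt
  obtain ⟨⟨a1,a2⟩,b1,b2⟩ := hx
  obtain ⟨⟨c1,c2⟩,d1,d2⟩ := hy
  nlinarith

lemma IsUnitSquare.dist_le {S : Set E2} (h : IsUnitSquare S) {x y : E2}
    (hx : x ∈ S) (hy : y ∈ S) : dist x y ≤ Real.sqrt 2 := by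
  obtain ⟨f, rfl⟩ := h
  obtain ⟨a, ha, rfl⟩ := hx
  obtain ⟨b, hb, rfl⟩ := hy
  rw [f.dist_eq]
  exact diam_unitSq ha hb

-- frontier facts
lemma isClosed_sqSet (s : ℝ) : IsClosed (sqSet s) := by
  have h0 : Continuous fun p : E2 => p 0 := (EuclideanSpace.proj (0 : Fin 2)).continuous
  have h1 : Continuous fun p : E2 => p 1 := (EuclideanSpace.proj (1 : Fin 2)).continuous
  exact (isClosed_Icc.preimage h0).inter (isClosed_Icc.preimage h1)

lemma frontier_sqSet_subset (s : ℝ) :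
    frontier (sqSet s) ⊆ {p : E2 | (p 0 ∈ Set.Icc 0 s ∧ p 1 ∈ Set.Icc 0 s) ∧
      (p 0 = 0 ∨ p 0 = s ∨ p 1 = 0 ∨ p 1 = s)} := by
  intro p hp
  have hmem : p ∈ sqSet s := by
    have := hp.1
    rwa [(isClosed_sqSet s).closure_eq] at this
  refine ⟨⟨hmem.1, hmem.2⟩, ?_⟩
  by_contra hc
  push_neg at hc
  obtain ⟨h1, h2, h3, h4⟩ := hc
  have hop : IsOpen {p : E2 | p 0 ∈ Set.Ioo 0 s ∧ p 1 ∈ Set.Ioo 0 s} := by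
    have h0 : Continuous fun p : E2 => p 0 := (EuclideanSpace.proj (0 : Fin 2)).continuous
    have h1 : Continuous fun p : E2 => p 1 := (EuclideanSpace.proj (1 : Fin 2)).continuous
    exact (isOpen_Ioo.preimage h0).inter (isOpen_Ioo.preimage h1)
  have hsub : {p : E2 | p 0 ∈ Set.Ioo 0 s ∧ p 1 ∈ Set.Ioo 0 s} ⊆ sqSet s := by
    rintro q ⟨hq0, hq1⟩; exact ⟨⟨hq0.1.le, hq0.2.le⟩, hq1.1.le, hq1.2.le⟩
  have hint : p ∈ interior (sqSet s) := by
    apply interior_maximal hsub hop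
    exact ⟨⟨lt_of_le_of_ne hmem.1.1 (Ne.symm h1), lt_of_le_of_ne hmem.1.2 h2⟩,
      lt_of_le_of_ne hmem.2.1 (Ne.symm h3), lt_of_le_of_ne hmem.2.2 h4⟩
  exact hp.2 hint

lemma mem_frontier_sqSet {s : ℝ} {p : E2} (hmem : p ∈ sqSet s)
    (hb : p 0 = 0 ∨ p 0 = s ∨ p 1 = 0 ∨ p 1 = s) : p ∈ frontier (sqSet s) := by
  constructor
  · exact subset_closure hmem
  · intro hint
    rw [mem_interior_iff_mem_nhds, Metric.mem_nhds_iff] at hint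
    obtain ⟨ε, hε, hball⟩ := hint
    -- pick direction: i coordinate, sign
    obtain ⟨i, c, hc, hlt⟩ : ∃ (i : Fin 2) (c : ℝ), p i = c ∧
        (c = 0 ∨ c = s) := by
      rcases hb with h | h | h | h
      exacts [⟨0, 0, h, Or.inl rfl⟩, ⟨0, s, h, Or.inr rfl⟩,
        ⟨1, 0, h, Or.inl rfl⟩, ⟨1, s, h, Or.inr rfl⟩]
    have hsingle : ∀ a : ℝ, 0 < a → a < ε → ∀ q : E2,
        (q = p - EuclideanSpace.single i a ∨ q = p + EuclideanSpace.single i a) →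
        q ∈ sqSet s := by
      intro a ha haε q hq
      apply hball
      have hn : ‖EuclideanSpace.single i a‖ = a := by
        rw [EuclideanSpace.norm_single, Real.norm_eq_abs, abs_of_pos ha]
      rcases hq with rfl | rfl
      · simpa [mem_ball, dist_self_sub_left, hn] using haε
      · simpa [mem_ball, dist_self_add_left, hn] using haε
    have hiv : ∀ q : E2, q ∈ sqSet s → 0 ≤ q i ∧ q i ≤ s := by
      intro q hq
      have : i = 0 ∨ i = 1 := by omega
      rcases this with rfl | rfl
      exacts [⟨hq.1.1, hq.1.2⟩, ⟨hq.2.1, hq.2.2⟩]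
    rcases hlt with h0c | hsc
    · have hq := hsingle (ε/2) (by linarith) (by linarith) _ (Or.inl rfl)
      have h0 := (hiv _ hq).1
      have heq : (p - EuclideanSpace.single i (ε/2)) i = p i - ε/2 := by
        simp [EuclideanSpace.single_apply]
      rw [heq, hc, h0c] at h0; linarith
    · have hq := hsingle (ε/2) (by linarith) (by linarith) _ (Or.inr rfl)
      have h0 := (hiv _ hq).2
      have heq : (p + EuclideanSpace.single i (ε/2)) i = p i + ε/2 := by
        simp [EuclideanSpace.single_apply]
      rw [heq, hc, hsc] at h0; linarith

lemma sqrt2_pos : (0:ℝ) < Real.sqrt 2 := Real.sqrt_pos.2 (by norm_num)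
lemma sqrt2_lt_two : Real.sqrt 2 < 2 := by
  nlinarith [Real.sq_sqrt (by norm_num : (0:ℝ) ≤ 2), sqrt2_pos]

/-- half of √2 -/
def hs2 : ℝ := Real.sqrt 2 / 2
lemma hs2_sq : hs2 ^ 2 = 1 / 2 := by
  rw [hs2, div_pow, Real.sq_sqrt (by norm_num : (0:ℝ) ≤ 2)]
  norm_num
lemma hs2_pos : 0 < hs2 := by rw [hs2]; positivity
lemma two_hs2 : hs2 + hs2 = Real.sqrt 2 := by rw [hs2]; ring

/-- rotation by 45 degrees plus translation, sending `unitSq` to the diamond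
centered at `v` with vertices at distance `√2/2` along the axes. -/
def diaIso (v : E2) : E2 ≃ᵢ E2 where
  toFun q := pt ((q 0 - q 1) * hs2 + v 0) ((q 0 + q 1) * hs2 - hs2 + v 1)
  invFun p := pt (((p 0 - v 0) + (p 1 - v 1 + hs2)) * hs2)
                 (((p 1 - v 1 + hs2) - (p 0 - v 0)) * hs2)
  left_inv q := by
    have hc := hs2_sq
    ext i
    have : i = 0 ∨ i = 1 := by omega
    rcases this with rfl | rfl <;> simp only [pt0, pt1]
    · linear_combination (2 * q 0) * hc
    · linear_combination (2 * q 1) * hc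
  right_inv p := by
    have hc := hs2_sq
    ext i
    have : i = 0 ∨ i = 1 := by omega
    rcases this with rfl | rfl <;> simp only [pt0, pt1]
    · linear_combination (2 * (p 0 - v 0)) * hc
    · linear_combination (2 * (p 1 - v 1 + hs2)) * hc
  isometry_toFun := by
    apply Isometry.of_dist_eq
    intro x y
    rw [dist_eq2, dist_eq2]
    congr 1
    simp only [pt0, pt1]
    linear_combination (2 * ((x 0 - y 0)^2 + (x 1 - y 1)^2)) * hs2_sq

lemma mem_dia {v p : E2} (h : |p 0 - v 0| + |p 1 - v 1| ≤ hs2) :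
    p ∈ (diaIso v) '' unitSq := by
  refine ⟨(diaIso v).symm p, ?_, (diaIso v).apply_symm_apply p⟩
  have hX := abs_le.1 (le_trans (le_add_of_nonneg_right (abs_nonneg _)) h)
  have hY := abs_le.1 (le_trans (le_add_of_nonneg_left (abs_nonneg _)) h)
  have hXY : -hs2 ≤ (p 0 - v 0) + (p 1 - v 1) ∧ (p 0 - v 0) + (p 1 - v 1) ≤ hs2 := by
    constructor <;> nlinarith [neg_abs_le (p 0 - v 0), le_abs_self (p 0 - v 0),
      neg_abs_le (p 1 - v 1), le_abs_self (p 1 - v 1), h]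
  have hYX : -hs2 ≤ (p 1 - v 1) - (p 0 - v 0) ∧ (p 1 - v 1) - (p 0 - v 0) ≤ hs2 := by
    constructor <;> nlinarith [neg_abs_le (p 0 - v 0), le_abs_self (p 0 - v 0),
      neg_abs_le (p 1 - v 1), le_abs_self (p 1 - v 1), h]
  have h2 : (0:ℝ) < hs2 := hs2_pos
  have hc := hs2_sq
  constructor
  · show ((p 0 - v 0) + (p 1 - v 1 + hs2)) * hs2 ∈ Set.Icc (0:ℝ) 1
    constructor
    · nlinarith [hXY.1]
    · nlinarith [hXY.2]
  · show ((p 1 - v 1 + hs2) - (p 0 - v 0)) * hs2 ∈ Set.Icc (0:ℝ) 1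
    constructor
    · nlinarith [hYX.1]
    · nlinarith [hYX.2]

/-- translated axis-aligned unit square membership -/
lemma mem_trans {v p : E2} (h0 : p 0 ∈ Set.Icc (v 0) (v 0 + 1))
    (h1 : p 1 ∈ Set.Icc (v 1) (v 1 + 1)) :
    p ∈ (IsometryEquiv.addRight v) '' unitSq := by
  refine ⟨p - v, ⟨?_, ?_⟩, by simp⟩
  · have : (p - v) 0 = p 0 - v 0 := rfl
    rw [this]; exact ⟨by linarith [h0.1], by linarith [h0.2]⟩
  · have : (p - v) 1 = p 1 - v 1 := rfl
    rw [this]; exact ⟨by linarith [h1.1], by linarith [h1.2]⟩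

def cSeq (r : ℕ) : ℝ := 1 + ((r:ℝ) + 1/2) * Real.sqrt 2

def coverFam (s : ℝ) : ℕ → Set E2 := fun v =>
  if v = 0 then (IsometryEquiv.addRight (pt 0 0)) '' unitSq
  else if v = 1 then (IsometryEquiv.addRight (pt (s-1) 0)) '' unitSq
  else if v = 2 then (IsometryEquiv.addRight (pt (s-1) (s-1))) '' unitSq
  else if v = 3 then (IsometryEquiv.addRight (pt 0 (s-1))) '' unitSq
  else if (v - 4) % 4 = 0 then (diaIso (pt (cSeq ((v - 4)/4)) 0)) '' unitSq
  else if (v - 4) % 4 = 1 then (diaIso (pt s (cSeq ((v - 4)/4)))) '' unitSq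
  else if (v - 4) % 4 = 2 then (diaIso (pt (cSeq ((v - 4)/4)) s)) '' unitSq
  else (diaIso (pt 0 (cSeq ((v - 4)/4)))) '' unitSq

lemma coverFam_isUnitSquare (s : ℝ) (v : ℕ) : IsUnitSquare (coverFam s v) := by
  unfold coverFam
  split_ifs <;> exact ⟨_, rfl⟩

lemma eG0 (s : ℝ) : coverFam s 0 = (IsometryEquiv.addRight (pt 0 0)) '' unitSq := by
  simp [coverFam]
lemma eG1 (s : ℝ) : coverFam s 1 = (IsometryEquiv.addRight (pt (s-1) 0)) '' unitSq := by
  simp [coverFam]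
lemma eG2 (s : ℝ) : coverFam s 2 = (IsometryEquiv.addRight (pt (s-1) (s-1))) '' unitSq := by
  simp [coverFam]
lemma eG3 (s : ℝ) : coverFam s 3 = (IsometryEquiv.addRight (pt 0 (s-1))) '' unitSq := by
  simp [coverFam]
lemma eD0 (s : ℝ) (r : ℕ) : coverFam s (4+4*r+0) = (diaIso (pt (cSeq r) 0)) '' unitSq := by
  unfold coverFam
  rw [if_neg (by omega), if_neg (by omega), if_neg (by omega), if_neg (by omega),
    if_pos (by omega), show (4+4*r+0-4)/4 = r by omega]
lemma eD1 (s : ℝ) (r : ℕ) : coverFam s (4+4*r+1) = (diaIso (pt s (cSeq r))) '' unitSq := by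
  unfold coverFam
  rw [if_neg (by omega), if_neg (by omega), if_neg (by omega), if_neg (by omega),
    if_neg (by omega), if_pos (by omega), show (4+4*r+1-4)/4 = r by omega]
lemma eD2 (s : ℝ) (r : ℕ) : coverFam s (4+4*r+2) = (diaIso (pt (cSeq r) s)) '' unitSq := by
  unfold coverFam
  rw [if_neg (by omega), if_neg (by omega), if_neg (by omega), if_neg (by omega),
    if_neg (by omega), if_neg (by omega), if_pos (by omega),
    show (4+4*r+2-4)/4 = r by omega]
lemma eD3 (s : ℝ) (r : ℕ) : coverFam s (4+4*r+3) = (diaIso (pt 0 (cSeq r))) '' unitSq := by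
  unfold coverFam
  rw [if_neg (by omega), if_neg (by omega), if_neg (by omega), if_neg (by omega),
    if_neg (by omega), if_neg (by omega), if_neg (by omega),
    show (4+4*r+3-4)/4 = r by omega]

lemma side_param (m : ℕ) (t : ℝ) (h1 : 1 < t)
    (h2 : t < 1 + ((m:ℝ) - 1) * Real.sqrt 2) :
    ∃ r : ℕ, (r:ℝ) < (m:ℝ) - 1 ∧ |t - cSeq r| ≤ hs2 := by
  refine ⟨⌊(t - 1) / Real.sqrt 2⌋₊, ?_, ?_⟩
  · have hle : ((⌊(t - 1) / Real.sqrt 2⌋₊ : ℝ)) ≤ (t - 1) / Real.sqrt 2 :=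
      Nat.floor_le (div_nonneg (by linarith) sqrt2_pos.le)
    have : (t - 1) / Real.sqrt 2 < (m:ℝ) - 1 := by
      rw [div_lt_iff₀ sqrt2_pos]; nlinarith
    linarith
  · unfold cSeq
    have hle : ((⌊(t - 1) / Real.sqrt 2⌋₊ : ℝ)) * Real.sqrt 2 ≤ t - 1 :=
      (le_div_iff₀ sqrt2_pos).1 (Nat.floor_le (div_nonneg (by linarith) sqrt2_pos.le))
    have hlt : t - 1 < ((⌊(t - 1) / Real.sqrt 2⌋₊ : ℝ) + 1) * Real.sqrt 2 :=
      (div_lt_iff₀ sqrt2_pos).1 (Nat.lt_floor_add_one _)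
    rw [abs_le]
    constructor <;> nlinarith [two_hs2, sqrt2_pos]

lemma cover_exists (n : ℕ) (hn : 4 ≤ n) (hmod : n % 4 = 0) :
    ∃ F : Fin n → Set E2, (∀ i, IsUnitSquare (F i)) ∧
      frontier (sqSet (2 + ((n : ℝ) - 4) / 4 * Real.sqrt 2)) ⊆ ⋃ i, F i := by
  obtain ⟨m, rfl⟩ : ∃ m, n = 4 * m := ⟨n/4, by omega⟩
  have hm : 1 ≤ m := by omega
  set s : ℝ := 2 + (((4*m : ℕ) : ℝ) - 4) / 4 * Real.sqrt 2 with hs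
  have hsval : s = 2 + ((m:ℝ) - 1) * Real.sqrt 2 := by rw [hs]; push_cast; ring
  have hs2' : 2 ≤ s := by
    rw [hsval]
    have hm' : (1:ℝ) ≤ (m:ℝ) := by exact_mod_cast hm
    nlinarith [sqrt2_pos]
  classical
  have key : ∀ (t : ℝ), 1 < t → t < s - 1 →
      ∃ r : ℕ, (r:ℝ) < (m:ℝ) - 1 ∧ |t - cSeq r| ≤ hs2 := by
    intro t h1 h2
    apply side_param
    · exact h1
    · rw [hsval] at h2; linarith
  have hidx : ∀ r : ℕ, (r:ℝ) < (m:ℝ) - 1 → ∀ k : ℕ, k < 4 → 4 + 4*r + k < 4*m := by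
    intro r hr k hk
    have h1 : ((r:ℝ)) + 1 < (m:ℝ) := by linarith
    have h2 : r + 1 < m := by exact_mod_cast h1
    omega
  refine ⟨fun i => coverFam s i.val, fun i => coverFam_isUnitSquare s i.val, ?_⟩
  intro p hp
  obtain ⟨⟨hp0, hp1⟩, hb⟩ := frontier_sqSet_subset s hp
  rw [mem_iUnion]
  obtain ⟨hp0l, hp0r⟩ := hp0
  obtain ⟨hp1l, hp1r⟩ := hp1
  rcases hb with h | h | h | h
  · -- left side : p 0 = 0
    by_cases ht1 : p 1 ≤ 1
    · refine ⟨⟨0, by omega⟩, ?_⟩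
      show p ∈ coverFam s 0
      rw [eG0]
      refine mem_trans ⟨?_, ?_⟩ ⟨?_, ?_⟩ <;> simp only [pt0, pt1, h] <;> linarith
    · by_cases ht2 : s - 1 ≤ p 1
      · refine ⟨⟨3, by omega⟩, ?_⟩
        show p ∈ coverFam s 3
        rw [eG3]
        refine mem_trans ⟨?_, ?_⟩ ⟨?_, ?_⟩ <;> simp only [pt0, pt1, h] <;> linarith
      · obtain ⟨r, hr, habs⟩ := key (p 1) (by linarith) (by linarith)
        refine ⟨⟨4+4*r+3, hidx r hr 3 (by omega)⟩, ?_⟩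
        show p ∈ coverFam s (4+4*r+3)
        rw [eD3]
        apply mem_dia
        simp only [pt0, pt1, h, sub_zero, sub_self, abs_zero, zero_add]
        exact habs
  · -- right side : p 0 = s
    by_cases ht1 : p 1 ≤ 1
    · refine ⟨⟨1, by omega⟩, ?_⟩
      show p ∈ coverFam s 1
      rw [eG1]
      refine mem_trans ⟨?_, ?_⟩ ⟨?_, ?_⟩ <;> simp only [pt0, pt1, h] <;> linarith
    · by_cases ht2 : s - 1 ≤ p 1
      · refine ⟨⟨2, by omega⟩, ?_⟩
        show p ∈ coverFam s 2
        rw [eG2]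
        refine mem_trans ⟨?_, ?_⟩ ⟨?_, ?_⟩ <;> simp only [pt0, pt1, h] <;> linarith
      · obtain ⟨r, hr, habs⟩ := key (p 1) (by linarith) (by linarith)
        refine ⟨⟨4+4*r+1, hidx r hr 1 (by omega)⟩, ?_⟩
        show p ∈ coverFam s (4+4*r+1)
        rw [eD1]
        apply mem_dia
        simp only [pt0, pt1, h, sub_zero, sub_self, abs_zero, zero_add]
        exact habs
  · -- bottom side : p 1 = 0
    by_cases ht1 : p 0 ≤ 1
    · refine ⟨⟨0, by omega⟩, ?_⟩
      show p ∈ coverFam s 0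
      rw [eG0]
      refine mem_trans ⟨?_, ?_⟩ ⟨?_, ?_⟩ <;> simp only [pt0, pt1, h] <;> linarith
    · by_cases ht2 : s - 1 ≤ p 0
      · refine ⟨⟨1, by omega⟩, ?_⟩
        show p ∈ coverFam s 1
        rw [eG1]
        refine mem_trans ⟨?_, ?_⟩ ⟨?_, ?_⟩ <;> simp only [pt0, pt1, h] <;> linarith
      · obtain ⟨r, hr, habs⟩ := key (p 0) (by linarith) (by linarith)
        refine ⟨⟨4+4*r+0, hidx r hr 0 (by omega)⟩, ?_⟩
        show p ∈ coverFam s (4+4*r+0)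
        rw [eD0]
        apply mem_dia
        simp only [pt0, pt1, h, sub_zero, sub_self, abs_zero, add_zero]
        exact habs
  · -- top side : p 1 = s
    by_cases ht1 : p 0 ≤ 1
    · refine ⟨⟨3, by omega⟩, ?_⟩
      show p ∈ coverFam s 3
      rw [eG3]
      refine mem_trans ⟨?_, ?_⟩ ⟨?_, ?_⟩ <;> simp only [pt0, pt1, h] <;> linarith
    · by_cases ht2 : s - 1 ≤ p 0
      · refine ⟨⟨2, by omega⟩, ?_⟩
        show p ∈ coverFam s 2
        rw [eG2]
        refine mem_trans ⟨?_, ?_⟩ ⟨?_, ?_⟩ <;> simp only [pt0, pt1, h] <;> linarith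
      · obtain ⟨r, hr, habs⟩ := key (p 0) (by linarith) (by linarith)
        refine ⟨⟨4+4*r+2, hidx r hr 2 (by omega)⟩, ?_⟩
        show p ∈ coverFam s (4+4*r+2)
        rw [eD2]
        apply mem_dia
        simp only [pt0, pt1, h, sub_zero, sub_self, abs_zero, add_zero]
        exact habs

def sidePt (s : ℝ) (k : ℕ) (t : ℝ) : E2 :=
  if k % 4 = 0 then pt t 0 else if k % 4 = 1 then pt s t
  else if k % 4 = 2 then pt (s-t) s else pt 0 (s-t)

lemma sidePt_mod (s : ℝ) (k : ℕ) (t : ℝ) : sidePt s (k % 4) t = sidePt s k t := by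
  unfold sidePt
  rw [Nat.mod_mod_of_dvd k (dvd_refl 4)]

lemma sidePt_same (s : ℝ) (k : ℕ) (t t' : ℝ) :
    dist (sidePt s k t) (sidePt s k t') = |t - t'| := by
  rw [← sidePt_mod s k t, ← sidePt_mod s k t']
  have h4 : k % 4 < 4 := Nat.mod_lt _ (by norm_num)
  set r := k % 4 with hr
  interval_cases r <;>
    simp [sidePt, dist_eq2, ← Real.sqrt_sq_eq_abs] <;> congr 1 <;> ring

lemma sidePt_adj (s : ℝ) (k : ℕ) (t t' : ℝ) :
    dist (sidePt s k t) (sidePt s (k+1) t') = Real.sqrt ((s-t)^2 + t'^2) := by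
  rw [← sidePt_mod s k t, ← sidePt_mod s (k+1) t']
  have h4 : k % 4 < 4 := Nat.mod_lt _ (by norm_num)
  have e : (k+1) % 4 = (k % 4 + 1) % 4 := by omega
  rw [e]
  set r := k % 4 with hr
  interval_cases r <;>
    · norm_num [sidePt, dist_eq2]
      try { congr 1; ring }

lemma sidePt_opp (s : ℝ) (hs : 0 ≤ s) (k : ℕ) (t t' : ℝ) :
    s ≤ dist (sidePt s k t) (sidePt s (k+2) t') := by
  rw [← sidePt_mod s k t, ← sidePt_mod s (k+2) t']
  have h4 : k % 4 < 4 := Nat.mod_lt _ (by norm_num)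
  have e : (k+2) % 4 = (k % 4 + 2) % 4 := by omega
  rw [e]
  set r := k % 4 with hr
  interval_cases r
  · calc s = |(sidePt s 0 t) 1 - (sidePt s 2 t') 1| := by
          simp [sidePt, abs_of_nonneg hs]
      _ ≤ _ := abs_coord_le_dist _ _ 1
  · calc s = |(sidePt s 1 t) 0 - (sidePt s 3 t') 0| := by
          simp [sidePt, abs_of_nonneg hs]
      _ ≤ _ := abs_coord_le_dist _ _ 0
  · calc s = |(sidePt s 2 t) 1 - (sidePt s 4 t') 1| := by
          simp [sidePt, abs_of_nonneg hs]
      _ ≤ _ := abs_coord_le_dist _ _ 1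
  · calc s = |(sidePt s 3 t) 0 - (sidePt s 5 t') 0| := by
          simp [sidePt, abs_of_nonneg hs]
      _ ≤ _ := abs_coord_le_dist _ _ 0

lemma sidePt_corner (s : ℝ) (k : ℕ) : sidePt s k s = sidePt s (k+1) 0 := by
  rw [← sidePt_mod s k s, ← sidePt_mod s (k+1) 0]
  have h4 : k % 4 < 4 := Nat.mod_lt _ (by norm_num)
  have e : (k+1) % 4 = (k % 4 + 1) % 4 := by omega
  rw [e]
  set r := k % 4 with hr
  interval_cases r <;> (unfold sidePt; norm_num)

lemma sidePt_frontier (s : ℝ) (hs : 0 ≤ s) (k : ℕ) (t : ℝ) (h0 : 0 ≤ t) (h1 : t ≤ s) :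
    sidePt s k t ∈ frontier (sqSet s) := by
  rw [← sidePt_mod s k t]
  have h4 : k % 4 < 4 := Nat.mod_lt _ (by norm_num)
  set r := k % 4 with hr
  interval_cases r <;> unfold sidePt <;> norm_num <;>
    apply mem_frontier_sqSet <;>
    first
      | (constructor <;> constructor <;> simp <;> linarith)
      | simp

def covSet (s : ℝ) (S : Set E2) (k : ℕ) : Set ℝ :=
  {t | 0 ≤ t ∧ t ≤ s ∧ sidePt s k t ∈ S}

def MeetsSide (s : ℝ) (S : Set E2) (k : ℕ) : Prop := (covSet s S k).Nonempty

lemma covSet_congr {k k' : ℕ} (h : k % 4 = k' % 4) (s : ℝ) (S : Set E2) :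
    covSet s S k = covSet s S k' := by
  unfold covSet
  ext t
  simp only [Set.mem_setOf_eq]
  rw [← sidePt_mod s k t, h, sidePt_mod]

lemma meets_congr {k k' : ℕ} (h : k % 4 = k' % 4) (s : ℝ) (S : Set E2) :
    MeetsSide s S k ↔ MeetsSide s S k' := by
  unfold MeetsSide; rw [covSet_congr h]

section sq
variable {s : ℝ} {S : Set E2}

lemma no_opp (hU : IsUnitSquare S) (hs2 : 2 < s) {k : ℕ} (h1 : MeetsSide s S k) (h2 : MeetsSide s S (k+2)) :
    False := by
  obtain ⟨t, ht⟩ := h1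
  obtain ⟨t', ht'⟩ := h2
  have ha := sidePt_opp s (by linarith) k t t'
  have hb := hU.dist_le ht.2.2 ht'.2.2
  linarith [sqrt2_lt_two]

lemma window1 (hU : IsUnitSquare S) {k : ℕ} (h1 : MeetsSide s S (k+1)) {t : ℝ} (ht : t ∈ covSet s S k) :
    s - t ≤ Real.sqrt 2 := by
  obtain ⟨t', ht'⟩ := h1
  have hb := hU.dist_le ht.2.2 ht'.2.2
  rw [sidePt_adj] at hb
  calc s - t = Real.sqrt ((s-t)^2) := (Real.sqrt_sq (by linarith [ht.2.1])).symm
    _ ≤ Real.sqrt ((s-t)^2 + t'^2) := Real.sqrt_le_sqrt (by nlinarith)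
    _ ≤ Real.sqrt 2 := hb

lemma window2 (hU : IsUnitSquare S) {k : ℕ} (h1 : MeetsSide s S k) {t' : ℝ} (ht' : t' ∈ covSet s S (k+1)) :
    t' ≤ Real.sqrt 2 := by
  obtain ⟨t, ht⟩ := h1
  have hb := hU.dist_le ht.2.2 ht'.2.2
  rw [sidePt_adj] at hb
  calc t' = Real.sqrt (t'^2) := (Real.sqrt_sq ht'.1).symm
    _ ≤ Real.sqrt ((s-t)^2 + t'^2) := Real.sqrt_le_sqrt (by nlinarith)
    _ ≤ Real.sqrt 2 := hb

lemma pair_bound (hU : IsUnitSquare S) (hs : 0 ≤ s) {k : ℕ} (h1 : MeetsSide s S k) (h2 : MeetsSide s S (k+1)) :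
    (s - sInf (covSet s S k)) + sSup (covSet s S (k+1)) ≤ 2 := by
  have key : ∀ t ∈ covSet s S k, ∀ t' ∈ covSet s S (k+1), (s - t) + t' ≤ 2 := by
    intro t ht t' ht'
    have hb := hU.dist_le ht.2.2 ht'.2.2
    rw [sidePt_adj] at hb
    have hsq : (s-t)^2 + t'^2 ≤ 2 := by
      have h0 : (0:ℝ) ≤ (s-t)^2 + t'^2 := by positivity
      nlinarith [Real.sq_sqrt h0, Real.sq_sqrt (by norm_num : (0:ℝ) ≤ 2),
        Real.sqrt_nonneg ((s-t)^2 + t'^2), Real.sqrt_nonneg (2:ℝ)]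
    nlinarith [ht.2.1, ht'.1, sq_nonneg ((s-t) - t')]
  rw [add_comm, ← le_sub_iff_add_le]
  apply csSup_le h2
  intro t' ht'
  have hInf : s - 2 + t' ≤ sInf (covSet s S k) :=
    le_csInf h1 (fun t ht => by linarith [key t ht t' ht'])
  linarith

lemma flat_width (hU : IsUnitSquare S) {k : ℕ} (hne : (covSet s S k).Nonempty) :
    sSup (covSet s S k) ≤ sInf (covSet s S k) + Real.sqrt 2 := by
  apply csSup_le hne
  intro t ht
  have hInf : t - Real.sqrt 2 ≤ sInf (covSet s S k) := by
    apply le_csInf hne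
    intro t' ht'
    have hb := hU.dist_le ht.2.2 ht'.2.2
    rw [sidePt_same] at hb
    have h' := abs_le.1 hb
    linarith [h'.1, h'.2]
  linarith
end sq

lemma length_le {ι : Type*} [DecidableEq ι] (A : Finset ι) (a b : ι → ℝ) {c d : ℝ}
    (h : Icc c d ⊆ ⋃ i ∈ A, Icc (a i) (b i)) :
    d - c ≤ ∑ i ∈ A, max (b i - a i) 0 := by
  have h1 : volume (Icc c d) ≤ ∑ i ∈ A, volume (Icc (a i) (b i)) :=
    le_trans (measure_mono h) (measure_biUnion_finset_le A _)
  have h2 : ∀ i ∈ A, volume (Icc (a i) (b i)) = ENNReal.ofReal (max (b i - a i) 0) := by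
    intro i _
    rw [Real.volume_Icc]
    rcases le_total (b i - a i) 0 with hle | hle
    · rw [max_eq_right hle, ENNReal.ofReal_of_nonpos hle, ENNReal.ofReal_zero]
    · rw [max_eq_left hle]
  rw [Real.volume_Icc, Finset.sum_congr rfl h2,
    ← ENNReal.ofReal_sum_of_nonneg (fun i _ => le_max_right _ _)] at h1
  exact (ENNReal.ofReal_le_ofReal_iff (Finset.sum_nonneg fun i _ => le_max_right _ _)).1 h1

lemma covSet_sub {s : ℝ} {S : Set E2} {k : ℕ} : covSet s S k ⊆ Icc 0 s :=
  fun t ht => ⟨ht.1, ht.2.1⟩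

lemma upper_bound (n : ℕ) (hn : 4 ≤ n) (s : ℝ) (hs0 : 0 ≤ s) (F : Fin n → Set E2)
    (hF : ∀ i, IsUnitSquare (F i)) (hcov : frontier (sqSet s) ⊆ ⋃ i, F i) :
    s ≤ 2 + ((n:ℝ) - 4)/4 * Real.sqrt 2 := by
  have hn' : (4:ℝ) ≤ (n:ℝ) := by exact_mod_cast hn
  rcases le_or_gt s 2 with hs2 | hs2
  · nlinarith [sqrt2_pos.le]
  classical
  set T : ℕ → Finset (Fin n) :=
    fun k => Finset.univ.filter
      (fun i => MeetsSide s (F i) k ∧ MeetsSide s (F i) (k+1)) with hT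
  set Fl : ℕ → Finset (Fin n) :=
    fun k => Finset.univ.filter
      (fun i => MeetsSide s (F i) k ∧ ∀ k' < 4, MeetsSide s (F i) k' → k' = k) with hFl
  have hTmem : ∀ k i, i ∈ T k ↔ MeetsSide s (F i) k ∧ MeetsSide s (F i) (k+1) := by
    intro k i; simp [hT]
  have hFlmem : ∀ k i, i ∈ Fl k ↔
      MeetsSide s (F i) k ∧ ∀ k' < 4, MeetsSide s (F i) k' → k' = k := by
    intro k i; simp [hFl]
  have hside : ∀ k t, 0 ≤ t → t ≤ s → ∃ i, t ∈ covSet s (F i) k := by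
    intro k t h0 h1
    have h := hcov (sidePt_frontier s hs0 k t h0 h1)
    rw [mem_iUnion] at h
    obtain ⟨i, hi⟩ := h
    exact ⟨i, h0, h1, hi⟩
  have hTne : ∀ k, 1 ≤ (T k).card := by
    intro k
    obtain ⟨i, hi⟩ := hside k s hs0 le_rfl
    rw [Finset.one_le_card]
    refine ⟨i, (hTmem k i).2 ⟨⟨s, hi⟩, ⟨0, le_rfl, hs0, ?_⟩⟩⟩
    rw [← sidePt_corner]
    exact hi.2.2
  have htri : ∀ k, k < 4 → ∀ i : Fin n, ∀ t ∈ covSet s (F i) k,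
      i ∈ T k ∨ i ∈ T ((k+3) % 4) ∨ i ∈ Fl k := by
    intro k hk i t ht
    have hM : MeetsSide s (F i) k := ⟨t, ht⟩
    by_cases h1 : MeetsSide s (F i) (k+1)
    · exact Or.inl ((hTmem k i).2 ⟨hM, h1⟩)
    by_cases h3 : MeetsSide s (F i) (k+3)
    · refine Or.inr (Or.inl ((hTmem _ i).2 ⟨?_, ?_⟩))
      · exact (meets_congr (show (k+3) % 4 % 4 = (k+3) % 4 by omega) s (F i)).2 h3
      · exact (meets_congr (show ((k+3) % 4 + 1) % 4 = k % 4 by omega) s (F i)).2 hM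
    refine Or.inr (Or.inr ((hFlmem k i).2 ⟨hM, ?_⟩))
    intro k' hk' hMk'
    by_contra hne
    have hcases : k' % 4 = (k+1) % 4 ∨ k' % 4 = (k+2) % 4 ∨ k' % 4 = (k+3) % 4 := by
      omega
    rcases hcases with h | h | h
    · exact h1 ((meets_congr h s (F i)).1 hMk')
    · exact no_opp (hF i) hs2 hM ((meets_congr h s (F i)).1 hMk')
    · exact h3 ((meets_congr h s (F i)).1 hMk')
  have hTdisj : ∀ k, k < 4 → ∀ k', k' < 4 → k ≠ k' → Disjoint (T k) (T k') := by
    intro k hk k' hk' hne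
    rw [Finset.disjoint_left]
    intro i hik hik'
    obtain ⟨m1, m2⟩ := (hTmem k i).1 hik
    obtain ⟨m3, m4⟩ := (hTmem k' i).1 hik'
    have hcases : k' % 4 = (k+1) % 4 ∨ k' % 4 = (k+2) % 4 ∨ k' % 4 = (k+3) % 4 := by
      omega
    rcases hcases with h | h | h
    · exact no_opp (hF i) hs2 m1
        ((meets_congr (show (k'+1) % 4 = (k+2) % 4 by omega) s (F i)).1 m4)
    · exact no_opp (hF i) hs2 m1 ((meets_congr h s (F i)).1 m3)
    · exact no_opp (hF i) hs2 m2
        ((meets_congr (show k' % 4 = ((k+1)+2) % 4 by omega) s (F i)).1 m3)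
  have hFldisj : ∀ k, k < 4 → ∀ k', k' < 4 → k ≠ k' → Disjoint (Fl k) (Fl k') := by
    intro k hk k' hk' hne
    rw [Finset.disjoint_left]
    intro i hik hik'
    obtain ⟨m1, _⟩ := (hFlmem k i).1 hik
    obtain ⟨_, hex⟩ := (hFlmem k' i).1 hik'
    exact hne (hex k hk m1)
  have hTFldisj : ∀ k, k < 4 → ∀ k', k' < 4 → Disjoint (T k) (Fl k') := by
    intro k hk k' hk'
    rw [Finset.disjoint_left]
    intro i hik hifl
    obtain ⟨m1, m2⟩ := (hTmem k i).1 hik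
    obtain ⟨_, hex⟩ := (hFlmem k' i).1 hifl
    have e1 : k = k' := hex k hk m1
    have e2 : (k+1) % 4 = k' :=
      hex ((k+1) % 4) (by omega)
        ((meets_congr (show (k+1) % 4 % 4 = (k+1) % 4 by omega) s (F i)).2 m2)
    omega
  -- cardinality bound
  have hcard : (∑ k ∈ Finset.range 4, (T k).card) + (∑ k ∈ Finset.range 4, (Fl k).card)
      ≤ n := by
    have h1 : ((Finset.range 4).biUnion T).card = ∑ k ∈ Finset.range 4, (T k).card :=
      Finset.card_biUnion (fun x hx y hy hxy =>
        hTdisj x (Finset.mem_range.1 hx) y (Finset.mem_range.1 hy) hxy)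
    have h2 : ((Finset.range 4).biUnion Fl).card = ∑ k ∈ Finset.range 4, (Fl k).card :=
      Finset.card_biUnion (fun x hx y hy hxy =>
        hFldisj x (Finset.mem_range.1 hx) y (Finset.mem_range.1 hy) hxy)
    have h3 : Disjoint ((Finset.range 4).biUnion T) ((Finset.range 4).biUnion Fl) := by
      rw [Finset.disjoint_left]
      intro i hi1 hi2
      obtain ⟨k, hk, hik⟩ := Finset.mem_biUnion.1 hi1
      obtain ⟨k', hk', hik'⟩ := Finset.mem_biUnion.1 hi2
      exact (Finset.disjoint_left.1
        (hTFldisj k (Finset.mem_range.1 hk) k' (Finset.mem_range.1 hk')) hik) hik'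
    have h4 := Finset.card_le_univ
      (((Finset.range 4).biUnion T) ∪ ((Finset.range 4).biUnion Fl))
    rw [Finset.card_union_of_disjoint h3, h1, h2] at h4
    simpa using h4
  -- window sizes
  set L : ℕ → ℝ := fun k => sSup (⋃ i ∈ T k, covSet s (F i) (k+1)) with hL
  set R : ℕ → ℝ := fun k => s - sInf (⋃ i ∈ T k, covSet s (F i) k) with hR
  have hU1sub : ∀ k, (⋃ i ∈ T k, covSet s (F i) k) ⊆ Icc 0 s := by
    intro k t ht
    simp only [mem_iUnion] at ht
    obtain ⟨i, _, hti⟩ := ht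
    exact covSet_sub hti
  have hU2sub : ∀ k, (⋃ i ∈ T k, covSet s (F i) (k+1)) ⊆ Icc 0 s := by
    intro k t ht
    simp only [mem_iUnion] at ht
    obtain ⟨i, _, hti⟩ := ht
    exact covSet_sub hti
  have hU1ne : ∀ k, (⋃ i ∈ T k, covSet s (F i) k).Nonempty := by
    intro k
    obtain ⟨i, hi⟩ := Finset.card_pos.1 (hTne k)
    obtain ⟨t, ht⟩ := ((hTmem k i).1 hi).1
    exact ⟨t, mem_iUnion₂.2 ⟨i, hi, ht⟩⟩
  have hU2ne : ∀ k, (⋃ i ∈ T k, covSet s (F i) (k+1)).Nonempty := by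
    intro k
    obtain ⟨i, hi⟩ := Finset.card_pos.1 (hTne k)
    obtain ⟨t, ht⟩ := ((hTmem k i).1 hi).2
    exact ⟨t, mem_iUnion₂.2 ⟨i, hi, ht⟩⟩
  have hR0 : ∀ k, 0 ≤ R k := by
    intro k
    obtain ⟨t, ht⟩ := hU1ne k
    have h1 : sInf (⋃ i ∈ T k, covSet s (F i) k) ≤ t :=
      csInf_le (bddBelow_Icc.mono (hU1sub k)) ht
    have h2 := (hU1sub k ht).2
    simp only [hR]
    linarith
  have hL0 : ∀ k, 0 ≤ L k := by
    intro k
    obtain ⟨t, ht⟩ := hU2ne k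
    have h1 : t ≤ sSup (⋃ i ∈ T k, covSet s (F i) (k+1)) :=
      le_csSup (bddAbove_Icc.mono (hU2sub k)) ht
    have h2 := (hU2sub k ht).1
    simp only [hL]
    linarith
  have cornerBound : ∀ k, R k + L k ≤ 2 + (((T k).card : ℝ) - 1) * Real.sqrt 2 := by
    intro k
    rcases eq_or_lt_of_le (hTne k) with hc1 | hc2
    · obtain ⟨i, hi⟩ := Finset.card_eq_one.1 hc1.symm
      have him : i ∈ T k := by rw [hi]; exact Finset.mem_singleton_self i
      obtain ⟨m1, m2⟩ := (hTmem k i).1 him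
      have e1 : (⋃ j ∈ T k, covSet s (F j) k) = covSet s (F i) k := by
        rw [hi]; simp
      have e2 : (⋃ j ∈ T k, covSet s (F j) (k+1)) = covSet s (F i) (k+1) := by
        rw [hi]; simp
      have := pair_bound (hF i) hs0 m1 m2
      simp only [hR, hL, e1, e2, ← hc1]
      push_cast
      linarith
    · have hcast : (2:ℝ) ≤ ((T k).card : ℝ) := by exact_mod_cast hc2
      have hR2 : R k ≤ Real.sqrt 2 := by
        have h1 : s - Real.sqrt 2 ≤ sInf (⋃ i ∈ T k, covSet s (F i) k) := by
          apply le_csInf (hU1ne k)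
          intro t ht
          simp only [mem_iUnion] at ht
          obtain ⟨i, hi, hti⟩ := ht
          have := window1 (hF i) ((hTmem k i).1 hi).2 hti
          linarith
        simp only [hR]
        linarith
      have hL2 : L k ≤ Real.sqrt 2 := by
        apply csSup_le (hU2ne k)
        intro t' ht'
        simp only [mem_iUnion] at ht'
        obtain ⟨i, hi, hti⟩ := ht'
        exact window2 (hF i) ((hTmem k i).1 hi).1 hti
      have hmul : 0 ≤ (((T k).card : ℝ) - 2) * Real.sqrt 2 :=
        mul_nonneg (by linarith) sqrt2_pos.le
      nlinarith [sqrt2_lt_two, sqrt2_pos]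
  -- per-side inequality
  have perSide : ∀ k, k < 4 →
      s ≤ L ((k+3) % 4) + R k + ((Fl k).card : ℝ) * Real.sqrt 2 := by
    intro k hk
    set A : Bool ⊕ Fin n → ℝ := Sum.elim (fun b => if b then 0 else s - R k)
      (fun i => if i ∈ Fl k then sInf (covSet s (F i) k) else 1) with hA
    set B : Bool ⊕ Fin n → ℝ := Sum.elim (fun b => if b then L ((k+3) % 4) else s)
      (fun i => if i ∈ Fl k then sSup (covSet s (F i) k) else 0) with hB
    have hcover : Icc 0 s ⊆ ⋃ x ∈ (Finset.univ : Finset (Bool ⊕ Fin n)), Icc (A x) (B x) := by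
      intro t ⟨ht0, hts⟩
      obtain ⟨i, hti⟩ := hside k t ht0 hts
      rcases htri k hk i t hti with hiT | hiT3 | hiFl
      · refine mem_iUnion₂.2 ⟨Sum.inl false, Finset.mem_univ _, ?_, ?_⟩
        · simp only [hA, Sum.elim_inl, if_neg (Bool.false_ne_true), hR]
          have : sInf (⋃ j ∈ T k, covSet s (F j) k) ≤ t :=
            csInf_le (bddBelow_Icc.mono (hU1sub k)) (mem_iUnion₂.2 ⟨i, hiT, hti⟩)
          linarith
        · simp only [hB, Sum.elim_inl, if_neg (Bool.false_ne_true)]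
          exact hts
      · refine mem_iUnion₂.2 ⟨Sum.inl true, Finset.mem_univ _, ?_, ?_⟩
        · simp only [hA, Sum.elim_inl, if_pos rfl]
          exact ht0
        · simp only [hB, Sum.elim_inl, if_pos rfl, hL]
          have hmem : t ∈ ⋃ j ∈ T ((k+3) % 4), covSet s (F j) ((k+3) % 4 + 1) := by
            refine mem_iUnion₂.2 ⟨i, hiT3, ?_⟩
            rwa [covSet_congr (show ((k+3) % 4 + 1) % 4 = k % 4 by omega) s (F i)]
          exact le_csSup (bddAbove_Icc.mono (hU2sub ((k+3) % 4))) hmem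
      · refine mem_iUnion₂.2 ⟨Sum.inr i, Finset.mem_univ _, ?_, ?_⟩
        · simp only [hA, Sum.elim_inr, if_pos hiFl]
          exact csInf_le (bddBelow_Icc.mono (covSet_sub (s := s) (S := F i) (k := k))) hti
        · simp only [hB, Sum.elim_inr, if_pos hiFl]
          exact le_csSup (bddAbove_Icc.mono (covSet_sub (s := s) (S := F i) (k := k))) hti
    have hlen := length_le Finset.univ A B hcover
    rw [sub_zero] at hlen
    have hsum : ∑ x ∈ (Finset.univ : Finset (Bool ⊕ Fin n)), max (B x - A x) 0
        ≤ L ((k+3) % 4) + R k + ((Fl k).card : ℝ) * Real.sqrt 2 := by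
      rw [Fintype.sum_sum_type]
      have hbool : ∑ b : Bool, max (B (Sum.inl b) - A (Sum.inl b)) 0
          = L ((k+3) % 4) + R k := by
        have e1 : B (Sum.inl true) - A (Sum.inl true) = L ((k+3) % 4) := by
          simp [hA, hB]
        have e2 : B (Sum.inl false) - A (Sum.inl false) = R k := by
          simp [hA, hB]
        rw [Fintype.sum_bool, e1, e2, max_eq_left (hL0 _), max_eq_left (hR0 _)]

      rw [hbool]
      have hterm : ∀ i : Fin n, max (B (Sum.inr i) - A (Sum.inr i)) 0
          ≤ if i ∈ Fl k then Real.sqrt 2 else 0 := by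
        intro i
        by_cases hifl : i ∈ Fl k
        · simp only [hA, hB, Sum.elim_inr, if_pos hifl]
          apply max_le _ sqrt2_pos.le
          have hne : (covSet s (F i) k).Nonempty := ((hFlmem k i).1 hifl).1
          have := flat_width (hF i) hne
          linarith
        · simp only [hA, hB, Sum.elim_inr, if_neg hifl]
          norm_num
      have h2 : ∑ i : Fin n, max (B (Sum.inr i) - A (Sum.inr i)) 0
          ≤ ∑ i : Fin n, (if i ∈ Fl k then Real.sqrt 2 else 0) :=
        Finset.sum_le_sum (fun i _ => hterm i)
      have h3 : ∑ i : Fin n, (if i ∈ Fl k then Real.sqrt 2 else 0)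
          = ((Fl k).card : ℝ) * Real.sqrt 2 := by
        rw [Finset.sum_ite_mem, Finset.univ_inter, Finset.sum_const, nsmul_eq_mul]
      linarith
    linarith
  -- assemble
  have p0 := perSide 0 (by norm_num)
  have p1 := perSide 1 (by norm_num)
  have p2 := perSide 2 (by norm_num)
  have p3 := perSide 3 (by norm_num)
  norm_num at p0 p1 p2 p3
  have c0 := cornerBound 0
  have c1 := cornerBound 1
  have c2 := cornerBound 2
  have c3 := cornerBound 3
  have hcard' : ((T 0).card : ℝ) + (T 1).card + (T 2).card + (T 3).card
      + ((Fl 0).card + (Fl 1).card + (Fl 2).card + (Fl 3).card) ≤ (n : ℝ) := by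
    have := hcard
    simp [Finset.sum_range_succ] at this
    exact_mod_cast this
  have hprod := mul_le_mul_of_nonneg_right hcard' sqrt2_pos.le
  linarith

lemma Sbd_eq (n : ℕ) (hn : 4 ≤ n) (hmod : n % 4 = 0) :
    Sbd n = 2 + ((n : ℝ) - 4) / 4 * Real.sqrt 2 := by
  have hn' : (4:ℝ) ≤ (n:ℝ) := by exact_mod_cast hn
  have htar0 : 0 ≤ 2 + ((n : ℝ) - 4) / 4 * Real.sqrt 2 := by
    nlinarith [sqrt2_pos]
  have hmem : 2 + ((n : ℝ) - 4) / 4 * Real.sqrt 2 ∈ {s | 0 ≤ s ∧ ∃ F : Fin n → Set E2,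
      (∀ i, IsUnitSquare (F i)) ∧ frontier (sqSet s) ⊆ ⋃ i, F i} :=
    ⟨htar0, cover_exists n hn hmod⟩
  have hub : ∀ x ∈ {s | 0 ≤ s ∧ ∃ F : Fin n → Set E2,
      (∀ i, IsUnitSquare (F i)) ∧ frontier (sqSet s) ⊆ ⋃ i, F i},
      x ≤ 2 + ((n : ℝ) - 4) / 4 * Real.sqrt 2 := by
    rintro x ⟨hx0, F, hF, hcov⟩
    exact upper_bound n hn x hx0 F hF hcov
  apply le_antisymm
  · exact csSup_le ⟨_, hmem⟩ hub
  · exact le_csSup ⟨_, hub⟩ hmem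

theorem Sbd_values (n : ℕ) (hn : 4 ≤ n) (hmod : n % 4 = 0) :
    (∃ F : Fin n → Set E2, (∀ i, IsUnitSquare (F i)) ∧
      frontier (sqSet (2 + ((n : ℝ) - 4) / 4 * Real.sqrt 2)) ⊆ ⋃ i, F i) ∧
    2 + ((n : ℝ) - 4) / 4 * Real.sqrt 2 ≤ Sbd n ∧
    Sbd 4 = 2 ∧
    Sbd (n + 4) = Sbd n + Real.sqrt 2 := by
  refine ⟨cover_exists n hn hmod, (Sbd_eq n hn hmod).ge, ?_, ?_⟩
  · rw [Sbd_eq 4 le_rfl rfl]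
    norm_num
  · rw [Sbd_eq (n+4) (by omega) (by omega), Sbd_eq n hn hmod]
    push_cast
    ring

end
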